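/- On the Lie algebra g_{6,118}^{0,-1,-1} with structure equations (-e^{16}+e^{25}, -e^{15}-e^{26}, e^{36}-e^{45}, e^{35}+e^{46}, 0, 0), the pair F = e^{14} + e^{23} - e^{56} and ρ = e^{126} - e^{135} + e^{245} + e^{346} satisfies dF = 0, dρ = 0, F^3 ≠ 0, and F∧ρ = 0. -/

import Mathlib

open ExteriorAlgebra

noncomputable section

/-- The exterior algebra Λ*(g*) of a 6-dimensional real Lie algebra g,
    identified with the exterior algebra on ℝ^6. -/
abbrev E6 : Type := ExteriorAlgebra ℝ (Fin 6 → ℝ)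

/-- The basis 1-forms e^1, ..., e^6 (0-indexed). -/
def e (i : Fin 6) : E6 := ι ℝ (Pi.single i 1)

/-- Structure equations: d of the basis 1-forms. -/
def d1 : Fin 6 → E6 :=
  ![-(e 0 * e 5) + e 1 * e 4,
    -(e 0 * e 4) - e 1 * e 5,
    e 2 * e 5 - e 3 * e 4,
    e 2 * e 4 + e 3 * e 5,
    0,
    0]

/-- Leibniz: d(e^i ∧ e^j) = de^i ∧ e^j - e^i ∧ de^j. -/
def d2 (i j : Fin 6) : E6 := d1 i * e j - e i * d1 j

/-- Leibniz: d(e^i ∧ e^j ∧ e^k) = de^i ∧ e^j ∧ e^k - e^i ∧ de^j ∧ e^k + e^i ∧ e^j ∧ de^k. -/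
def d3 (i j k : Fin 6) : E6 := d1 i * e j * e k - e i * d1 j * e k + e i * e j * d1 k

/-- F. -/
def F : E6 := e 0 * e 3 + e 1 * e 2 - e 4 * e 5

/-- dF via the Leibniz rule. -/
def dF : E6 := d2 0 3 + d2 1 2 - d2 4 5

/-- ρ. -/
def ρ : E6 := e 0 * e 1 * e 5 - e 0 * e 2 * e 4 + e 1 * e 3 * e 4 + e 2 * e 3 * e 5

/-- dρ via the Leibniz rule. -/
def dρ : E6 := d3 0 1 5 - d3 0 2 4 + d3 1 3 4 + d3 2 3 5

/- ### Auxiliary lemmas -/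

lemma e_sq (i : Fin 6) : e i * e i = 0 := ι_sq_zero _

lemma e_sq' (i : Fin 6) (c : E6) : e i * (e i * c) = 0 := by
  rw [← mul_assoc, e_sq, zero_mul]

lemma e_swap (i j : Fin 6) (_h : j < i) : e i * e j = -(e j * e i) :=
  eq_neg_of_add_eq_zero_left (ι_add_mul_swap _ _)

lemma e_swap' (i j : Fin 6) (c : E6) (_h : j < i) : e i * (e j * c) = -(e j * (e i * c)) := by
  rw [← mul_assoc, e_swap i j _h, neg_mul, mul_assoc]

lemma d1_0 : d1 0 = -(e 0 * e 5) + e 1 * e 4 := rfl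
lemma d1_1 : d1 1 = -(e 0 * e 4) - e 1 * e 5 := rfl
lemma d1_2 : d1 2 = e 2 * e 5 - e 3 * e 4 := rfl
lemma d1_3 : d1 3 = e 2 * e 4 + e 3 * e 5 := rfl
lemma d1_4 : d1 4 = 0 := rfl
lemma d1_5 : d1 5 = 0 := rfl

set_option maxHeartbeats 1000000 in
lemma hdF : dF = 0 := by
  simp (config := { decide := true }) only [dF, d2, d1_0, d1_1, d1_2, d1_3, d1_4, d1_5,
    mul_add, add_mul, mul_sub, sub_mul, neg_mul, mul_neg, mul_assoc,
    e_sq, e_sq', e_swap, e_swap', mul_zero, zero_mul, neg_neg]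
  abel

set_option maxHeartbeats 1000000 in
lemma hdρ : dρ = 0 := by
  simp (config := { decide := true }) only [dρ, d3, d1_0, d1_1, d1_2, d1_3, d1_4, d1_5,
    mul_add, add_mul, mul_sub, sub_mul, neg_mul, mul_neg, mul_assoc,
    e_sq, e_sq', e_swap, e_swap', mul_zero, zero_mul, neg_neg]
  abel

set_option maxHeartbeats 1000000 in
lemma hFρ : F * ρ = 0 := by
  simp (config := { decide := true }) only [F, ρ,
    mul_add, add_mul, mul_sub, sub_mul, neg_mul, mul_neg, mul_assoc,
    e_sq, e_sq', e_swap, e_swap', mul_zero, zero_mul, neg_neg]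
  abel

set_option maxHeartbeats 1000000 in
lemma hF3 : F * F * F = -(6 • (e 0 * (e 1 * (e 2 * (e 3 * (e 4 * e 5)))))) := by
  simp (config := { decide := true }) only [F,
    mul_add, add_mul, mul_sub, sub_mul, neg_mul, mul_neg, mul_assoc,
    e_sq, e_sq', e_swap, e_swap', mul_zero, zero_mul, neg_neg]
  abel

/-- Alternating maps: determinant in degree 6, zero elsewhere. -/
def detf : ∀ n : ℕ, (Fin 6 → ℝ) [⋀^Fin n]→ₗ[ℝ] ℝ :=
  Function.update (fun _ => 0) 6 ((Pi.basisFun ℝ (Fin 6)).det)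

lemma detf_val : (detf 6) (fun i => Pi.single i 1) = 1 := by
  rw [detf, Function.update_self]
  have h1 : (fun i : Fin 6 => Pi.single i (1:ℝ)) = ⇑(Pi.basisFun ℝ (Fin 6)) := by
    funext i; simp [Pi.basisFun_apply]
  rw [h1, Module.Basis.det_self]

lemma top_eq : e 0 * (e 1 * (e 2 * (e 3 * (e 4 * e 5)))) =
    ιMulti ℝ 6 (fun i => Pi.single i 1) := by
  rw [ιMulti_apply]
  simp only [List.ofFn_succ, List.ofFn_zero, List.prod_cons, List.prod_nil, mul_one, e]
  rfl

lemma top_ne : e 0 * (e 1 * (e 2 * (e 3 * (e 4 * e 5)))) ≠ 0 := by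
  intro h
  have h2 := congrArg (liftAlternating (R := ℝ) detf) h
  rw [top_eq, liftAlternating_apply_ιMulti, map_zero, detf_val] at h2
  exact one_ne_zero h2

/-- Symplectic half-flat structure on g_{6,118}^{0,-1,-1}. -/
theorem stmt6 : dF = 0 ∧ dρ = 0 ∧ F * F * F ≠ 0 ∧ F * ρ = 0 := by
  refine ⟨hdF, hdρ, ?_, hFρ⟩
  rw [hF3, neg_ne_zero]
  rw [← Nat.cast_smul_eq_nsmul ℝ]
  exact smul_ne_zero (by norm_num) top_ne
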